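/- Let X be a set with a distinguished element x ∈ X, let A = FreeAlgebra ℚ X, and let δ_x : A → A be the unique derivation of A with δ_x(x) = x and δ_x(y) = 0 for every letter y ≠ x. Let Tₙˣ(X) ⊆ A denote the ℚ-linear span of words in which the letter x appears exactly n times, and let Lie(X) ⊆ A be the Lie subalgebra generated by the letters. Define D_x : A → A on words by D_x(y₁⋯yₘ) := [⋯[[δ_x(y₁), y₂], y₃]⋯, yₘ]. Then for every n ≥ 1 and every l ∈ Tₙˣ(X) ∩ Lie(X), one has D_x(l) = n·l. Consequently (1/n)·D_x restricted to Tₙˣ(X) is a projection of Tₙˣ(X) onto Tₙˣ(X) ∩ Lie(X). -/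

import Mathlib

attribute [local instance] LieRing.ofAssociativeRing

/-- For a distinguished letter `x ∈ X`, let `δ_x` be the derivation of
`A = FreeAlgebra ℚ X` with `δ_x(x) = x` and `δ_x(y) = 0` for letters `y ≠ x`, let `Tₙˣ(X)`
be the span of the words in which the letter `x` appears exactly `n` times, `Lie(X)` the
Lie subalgebra generated by the letters, and `D_x` the linear map given on words by
`D_x(y₁⋯yₘ) = [⋯[[δ_x(y₁), y₂], y₃]⋯, yₘ]` (`D_x(1) = 0`).  Then `D_x(l) = n·l` for every
`l ∈ Tₙˣ(X) ∩ Lie(X)` (`n ≥ 1`); moreover `D_x` maps `Tₙˣ(X)` into `Tₙˣ(X) ∩ Lie(X)`, so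
that `(1/n)·D_x` restricted to `Tₙˣ(X)` is a projection of `Tₙˣ(X)` onto
`Tₙˣ(X) ∩ Lie(X)`. -/
theorem statement3 (X : Type) [DecidableEq X] (x : X)
    (LieX : LieSubalgebra ℚ (FreeAlgebra ℚ X))
    (hLieX : LieX = LieSubalgebra.lieSpan ℚ (FreeAlgebra ℚ X)
      (Set.range (FreeAlgebra.ι ℚ : X → FreeAlgebra ℚ X)))
    (δx : FreeAlgebra ℚ X →ₗ[ℚ] FreeAlgebra ℚ X)
    (hδx : ∀ a b : FreeAlgebra ℚ X, δx (a * b) = δx a * b + a * δx b)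
    (hδxx : δx (FreeAlgebra.ι ℚ x) = FreeAlgebra.ι ℚ x)
    (hδxy : ∀ y : X, y ≠ x → δx (FreeAlgebra.ι ℚ y) = 0)
    (Tx : ℕ → Submodule ℚ (FreeAlgebra ℚ X))
    (hTx : ∀ n : ℕ, Tx n = Submodule.span ℚ
      { w : FreeAlgebra ℚ X | ∃ (m : ℕ) (y : Fin m → X),
          w = (List.ofFn fun i => FreeAlgebra.ι ℚ (y i)).prod ∧
          (List.ofFn y).count x = n })
    (Dx : FreeAlgebra ℚ X →ₗ[ℚ] FreeAlgebra ℚ X)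
    (hD1 : Dx 1 = 0)
    (hDword : ∀ (m : ℕ) (y : Fin (m + 1) → X),
      Dx (List.ofFn fun i => FreeAlgebra.ι ℚ (y i)).prod =
        (((List.ofFn y).tail).map fun z => FreeAlgebra.ι ℚ z).foldl
          (fun a b => a * b - b * a) (δx (FreeAlgebra.ι ℚ (y 0))))
    (n : ℕ) (hn : 1 ≤ n) :
    (∀ l ∈ Tx n ⊓ LieX.toSubmodule, Dx l = (n : ℚ) • l) ∧
    (∀ a ∈ Tx n, ((n : ℚ)⁻¹ • Dx a) ∈ Tx n ⊓ LieX.toSubmodule) := by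
  classical
  set ι : X → FreeAlgebra ℚ X := FreeAlgebra.ι ℚ with hιdef
  have hδ1 : δx 1 = 0 := by
    have h := hδx 1 1
    simp only [one_mul, mul_one] at h
    exact (add_eq_left.mp h.symm)
  have hset : ∀ k : ℕ, Tx k = Submodule.span ℚ
      { w : FreeAlgebra ℚ X | ∃ l : List X,
        w = (l.map ι).prod ∧ l.count x = k } := by
    intro k
    rw [hTx k]
    congr 1
    ext w
    constructor
    · rintro ⟨m, y, rfl, hc⟩
      exact ⟨List.ofFn y, by rw [List.map_ofFn]; rfl, hc⟩
    · rintro ⟨l, rfl, hc⟩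
      refine ⟨l.length, l.get, ?_, ?_⟩
      · have e : (List.ofFn fun i => ι (l.get i)) = List.map ι (List.ofFn l.get) :=
          (List.map_ofFn (f := l.get) (g := ι)).symm
        rw [e, List.ofFn_get]
      · rw [List.ofFn_get]; exact hc
  have word_mem : ∀ l : List X, (l.map ι).prod ∈ Tx (l.count x) := by
    intro l
    rw [hset]
    exact Submodule.subset_span ⟨l, rfl, rfl⟩
  have hι_lie : ∀ y : X, ι y ∈ LieX := by
    intro y; rw [hLieX]; exact LieSubalgebra.subset_lieSpan ⟨y, rfl⟩
  have hδι : ∀ a : X, δx (ι a) = ((if a = x then 1 else 0 : ℚ)) • ι a := by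
    intro a
    by_cases h : a = x
    · subst h; simp [hδxx]
    · simp [hδxy a h, h]
  have L1 : ∀ l : List X, δx ((l.map ι).prod)
      = (l.count x : ℚ) • (l.map ι).prod := by
    intro l
    induction l with
    | nil => simp [hδ1]
    | cons a t ih =>
      rw [List.map_cons, List.prod_cons, hδx, ih, hδι]
      rw [List.count_cons]
      by_cases h : a = x <;>
        · push_cast [h]
          simp only [if_true, if_false, smul_mul_assoc, mul_smul_comm,
            beq_iff_eq, h]
          module
  have hδT : ∀ (k : ℕ), ∀ a ∈ Tx k, δx a = (k : ℚ) • a := by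
    intro k a ha
    rw [hset] at ha
    induction ha using Submodule.span_induction with
    | mem w hw => obtain ⟨l, rfl, hc⟩ := hw; rw [L1, hc]
    | zero => simp
    | add u v hu hv ihu ihv => rw [map_add, ihu, ihv, smul_add]
    | smul c u hu ihu => rw [map_smul, ihu, smul_comm]
  have DxWord : ∀ (a : X) (t : List X),
      Dx (((a :: t).map ι).prod)
        = (t.map ι).foldl (fun u v => u * v - v * u) (δx (ι a)) := by
    intro a t
    have e1 : ∀ (m : ℕ) (y : Fin (m + 1) → X),
        (List.ofFn fun i => ι (y i)) = List.map ι (List.ofFn y) := by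
      intro m y; exact (List.map_ofFn (f := y) (g := ι)).symm
    have h := hDword t.length (Fin.cons a t.get)
    rw [e1] at h
    simpa [List.ofFn_succ, List.ofFn_get] using h
  have Dxι : ∀ y : X, Dx (ι y) = δx (ι y) := by
    intro y
    have := DxWord y []
    simpa using this
  set I : Submodule ℚ (FreeAlgebra ℚ X) := Submodule.span ℚ
    { w | ∃ (a : X) (t : List X), w = ((a :: t).map ι).prod } with hIdef
  have hmulι : ∀ w ∈ I, ∀ y : X, w * ι y ∈ I ∧ Dx (w * ι y) = ⁅Dx w, ι y⁆ := by
    intro w hw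
    induction hw using Submodule.span_induction with
    | mem u hu =>
      obtain ⟨a, t, rfl⟩ := hu
      intro y
      have e : ((a :: t).map ι).prod * ι y = ((a :: (t ++ [y])).map ι).prod := by
        simp [List.prod_append, mul_assoc]
      constructor
      · rw [e]; exact Submodule.subset_span ⟨a, t ++ [y], rfl⟩
      · rw [e, DxWord, List.map_append, List.foldl_append, ← DxWord]
        simp [Ring.lie_def]
    | zero => intro y; simp
    | add u v hu hv ihu ihv =>
      intro y
      refine ⟨?_, ?_⟩
      · rw [add_mul]; exact Submodule.add_mem _ (ihu y).1 (ihv y).1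
      · rw [add_mul, map_add, (ihu y).2, (ihv y).2, map_add, add_lie]
    | smul c u hu ihu =>
      intro y
      refine ⟨?_, ?_⟩
      · rw [smul_mul_assoc]; exact Submodule.smul_mem _ _ (ihu y).1
      · rw [smul_mul_assoc, map_smul, (ihu y).2, map_smul, smul_lie]
  have hC : ∀ p ∈ LieX, ∀ w ∈ I, w * p ∈ I ∧ Dx (w * p) = ⁅Dx w, p⁆ := by
    have hSle : LieX ≤
        ({ carrier := { p | ∀ w ∈ I, w * p ∈ I ∧ Dx (w * p) = ⁅Dx w, p⁆ }
           add_mem' := by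
             intro p q hp hq w hw
             have h1 := hp w hw; have h2 := hq w hw
             refine ⟨by rw [mul_add]; exact Submodule.add_mem _ h1.1 h2.1, ?_⟩
             rw [mul_add, map_add, h1.2, h2.2, lie_add]
           zero_mem' := by intro w hw; simp
           smul_mem' := by
             intro c p hp w hw
             have h := hp w hw
             refine ⟨by rw [mul_smul_comm]; exact Submodule.smul_mem _ _ h.1, ?_⟩
             rw [mul_smul_comm, map_smul, h.2, lie_smul]
           lie_mem' := by
             intro p q hp hq w hw
             have e : w * ⁅p, q⁆ = (w * p) * q - (w * q) * p := by
               simp [Ring.lie_def, mul_sub, mul_assoc]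
             have h1 := hp w hw
             have h3 := hq w hw
             have h2 := hq (w * p) h1.1
             have h4 := hp (w * q) h3.1
             refine ⟨by rw [e]; exact Submodule.sub_mem _ h2.1 h4.1, ?_⟩
             rw [e, map_sub, h2.2, h4.2, h1.2, h3.2]
             simp only [Ring.lie_def]
             noncomm_ring } : LieSubalgebra ℚ (FreeAlgebra ℚ X)) := by
      rw [hLieX]
      apply LieSubalgebra.lieSpan_le.mpr
      rintro _ ⟨y, rfl⟩ w hw
      exact hmulι w hw y
    intro p hp
    exact hSle hp
  have hM : ∀ p ∈ LieX, p ∈ I ∧ Dx p = δx p := by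
    have hSle : LieX ≤
        ({ carrier := { p | p ∈ I ∧ p ∈ LieX ∧ Dx p = δx p }
           add_mem' := by
             rintro p q ⟨h1, h2, h3⟩ ⟨h4, h5, h6⟩
             exact ⟨Submodule.add_mem _ h1 h4, LieX.add_mem h2 h5,
               by rw [map_add, map_add, h3, h6]⟩
           zero_mem' := ⟨Submodule.zero_mem _, LieX.zero_mem, by simp⟩
           smul_mem' := by
             rintro c p ⟨h1, h2, h3⟩
             exact ⟨Submodule.smul_mem _ _ h1, LieX.smul_mem c h2,
               by rw [map_smul, map_smul, h3]⟩
           lie_mem' := by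
             rintro p q ⟨hpI, hpL, hpD⟩ ⟨hqI, hqL, hqD⟩
             have h1 := hC q hqL p hpI
             have h2 := hC p hpL q hqI
             refine ⟨?_, LieX.lie_mem hpL hqL, ?_⟩
             · rw [Ring.lie_def]; exact Submodule.sub_mem _ h1.1 h2.1
             · rw [Ring.lie_def, map_sub, map_sub, h1.2, h2.2, hpD, hqD,
                 hδx p q, hδx q p]
               simp only [Ring.lie_def]
               abel } : LieSubalgebra ℚ (FreeAlgebra ℚ X)) := by
      refine hLieX.le.trans (LieSubalgebra.lieSpan_le.mpr ?_)
      rintro _ ⟨y, rfl⟩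
      refine ⟨Submodule.subset_span ⟨y, [], by simp⟩, hι_lie y, Dxι y⟩
    intro p hp
    exact ⟨(hSle hp).1, (hSle hp).2.2⟩
  have ιT : ∀ z : X, ι z ∈ Tx (if z = x then 1 else 0) := by
    intro z
    have := word_mem [z]
    simpa [List.count_cons] using this
  have Trmul : ∀ (k : ℕ) (u : FreeAlgebra ℚ X), u ∈ Tx k → ∀ z : X,
      u * ι z ∈ Tx (k + if z = x then 1 else 0) ∧
      ι z * u ∈ Tx (k + if z = x then 1 else 0) := by
    intro k u hu
    rw [hset] at hu
    induction hu using Submodule.span_induction with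
    | mem w hw =>
      obtain ⟨l, rfl, hc⟩ := hw
      intro z
      constructor
      · have e : (l.map ι).prod * ι z = ((l ++ [z]).map ι).prod := by
          simp [List.prod_append]
        rw [e]
        have := word_mem (l ++ [z])
        have e2 : (l ++ [z]).count x = k + if z = x then 1 else 0 := by
          rw [List.count_append, hc]
          simp [List.count_cons]
        rwa [e2] at this
      · have e : ι z * (l.map ι).prod = ((z :: l).map ι).prod := by simp
        rw [e]
        have := word_mem (z :: l)
        have e2 : (z :: l).count x = k + if z = x then 1 else 0 := by
          simp [List.count_cons, hc]
        rwa [e2] at this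
    | zero => intro z; simp
    | add u v hu hv ihu ihv =>
      intro z
      exact ⟨by rw [add_mul]; exact Submodule.add_mem _ (ihu z).1 (ihv z).1,
        by rw [mul_add]; exact Submodule.add_mem _ (ihu z).2 (ihv z).2⟩
    | smul c u hu ihu =>
      intro z
      exact ⟨by rw [smul_mul_assoc]; exact Submodule.smul_mem _ _ (ihu z).1,
        by rw [mul_smul_comm]; exact Submodule.smul_mem _ _ (ihu z).2⟩
  have foldmem : ∀ (t : List X) (k : ℕ) (u : FreeAlgebra ℚ X),
      u ∈ Tx k → u ∈ LieX →
      (t.map ι).foldl (fun a b => a * b - b * a) u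
        ∈ Tx (k + t.count x) ⊓ LieX.toSubmodule := by
    intro t
    induction t with
    | nil => intro k u hT hL; simpa using ⟨hT, hL⟩
    | cons z t ih =>
      intro k u hT hL
      have h1 := (Trmul k u hT z).1
      have h2 := (Trmul k u hT z).2
      have hT' : u * ι z - ι z * u ∈ Tx (k + if z = x then 1 else 0) :=
        Submodule.sub_mem _ h1 h2
      have hL' : u * ι z - ι z * u ∈ LieX := by
        have := LieX.lie_mem hL (hι_lie z)
        rwa [Ring.lie_def] at this
      have hind := ih (k + if z = x then 1 else 0) _ hT' hL'
      have e : k + (z :: t).count x = (k + if z = x then 1 else 0) + t.count x := by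
        rw [List.count_cons]
        by_cases h : z = x <;> simp [h] <;> omega
      rw [e]
      simpa using hind
  have hDxT : ∀ a ∈ Tx n, Dx a ∈ Tx n ⊓ LieX.toSubmodule := by
    intro a ha
    rw [hset] at ha
    induction ha using Submodule.span_induction with
    | mem w hw =>
      obtain ⟨l, rfl, hc⟩ := hw
      match l, hc with
      | [], hc => simp at hc; omega
      | a :: t, hc =>
        rw [DxWord]
        have hst : δx (ι a) ∈ Tx (if a = x then 1 else 0) := by
          by_cases h : a = x
          · rw [if_pos h, h, hδxx]; simpa using ιT x
          · rw [hδxy a h]; simp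
        have hsl : δx (ι a) ∈ LieX := by
          by_cases h : a = x
          · rw [h, hδxx]; exact hι_lie x
          · rw [hδxy a h]; exact LieX.zero_mem
        have hf := foldmem t _ _ hst hsl
        have e : (if a = x then 1 else 0) + t.count x = n := by
          rw [← hc, List.count_cons]
          by_cases h : a = x <;> simp [h] <;> omega
        rwa [e] at hf
    | zero => simp
    | add u v hu hv ihu ihv => rw [map_add]; exact Submodule.add_mem _ ihu ihv
    | smul c u hu ihu => rw [map_smul]; exact Submodule.smul_mem _ _ ihu
  constructor
  · rintro l ⟨hT, hL⟩
    rw [(hM l hL).2, hδT n l hT]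
  · intro a ha
    exact Submodule.smul_mem _ _ (hDxT a ha)
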